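/- arXiv:2507.20443 — 7 statements merged into one kernel-verified Lean document; each statement's English description precedes it below -/
import Mathlib

section
/- Let a, b ≥ 0 and suppose −a ≤ q_m − q_k ≤ b for every m ≠ k. Then the attention score to the query's own feature is sandwiched as 1 / (exp(b) · (N/c_k − 1) + 1) ≤ Attn_k(q) ≤ 1 / (exp(−a) · (N/c_k − 1) + 1). -/
/-- Grouped softmax attention score of feature `m`:
`Attn_m(q) = c_m · exp(q_m) / Σ_j c_j · exp(q_j)`. -/
noncomputable def Attn {K : ℕ} (c : Fin K → ℕ) (q : Fin K → ℝ) (m : Fin K) : ℝ :=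
  (c m : ℝ) * Real.exp (q m) / ∑ j, (c j : ℝ) * Real.exp (q j)

/-- If `−a ≤ q_m − q_k ≤ b` for every `m ≠ k` (with `a, b ≥ 0`), then
`1 / (exp(b)·(N/c_k − 1) + 1) ≤ Attn_k(q) ≤ 1 / (exp(−a)·(N/c_k − 1) + 1)`. -/
theorem attn_sandwich (K : ℕ) (hK : 2 ≤ K)
    (c : Fin K → ℕ) (hc : ∀ m, 1 ≤ c m) (N : ℕ) (hN : N = ∑ m, c m)
    (q : Fin K → ℝ) (k : Fin K) (a b : ℝ) (ha : 0 ≤ a) (hb : 0 ≤ b)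
    (hgap : ∀ m, m ≠ k → -a ≤ q m - q k ∧ q m - q k ≤ b) :
    1 / (Real.exp b * ((N : ℝ) / (c k : ℝ) - 1) + 1) ≤ Attn c q k ∧
    Attn c q k ≤ 1 / (Real.exp (-a) * ((N : ℝ) / (c k : ℝ) - 1) + 1) := by
  have hck : (0:ℝ) < (c k : ℝ) := by exact_mod_cast hc k
  have hE : 0 < Real.exp (q k) := Real.exp_pos _
  have hNk : (c k : ℝ) ≤ (N : ℝ) := by
    have : c k ≤ N := by
      rw [hN]
      exact Finset.single_le_sum (f := fun m => c m) (fun _ _ => Nat.zero_le _)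
        (Finset.mem_univ k)
    exact_mod_cast this
  have hNcast : (N : ℝ) = ∑ j, (c j : ℝ) := by rw [hN]; push_cast; ring
  set S := ∑ j, (c j : ℝ) * Real.exp (q j) with hSdef
  have hsplit : S = (c k : ℝ) * Real.exp (q k)
      + ∑ j ∈ Finset.univ.erase k, (c j : ℝ) * Real.exp (q j) := by
    rw [hSdef, ← Finset.add_sum_erase _ _ (Finset.mem_univ k)]
  have hsum_c : ∑ j ∈ Finset.univ.erase k, (c j : ℝ) = (N : ℝ) - (c k : ℝ) := by
    have h := Finset.add_sum_erase (Finset.univ) (fun j => (c j : ℝ)) (Finset.mem_univ k)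
    rw [hNcast, ← h]; ring
  have hub : S ≤ Real.exp (q k) * ((c k : ℝ) + Real.exp b * ((N : ℝ) - (c k : ℝ))) := by
    rw [hsplit]
    have hle : ∑ j ∈ Finset.univ.erase k, (c j : ℝ) * Real.exp (q j)
        ≤ ∑ j ∈ Finset.univ.erase k, (c j : ℝ) * (Real.exp b * Real.exp (q k)) := by
      refine Finset.sum_le_sum fun j hj => ?_
      have hjk : j ≠ k := Finset.ne_of_mem_erase hj
      have h2 : Real.exp (q j) ≤ Real.exp b * Real.exp (q k) := by
        rw [← Real.exp_add]
        exact Real.exp_le_exp.2 (by linarith [(hgap j hjk).2])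
      exact mul_le_mul_of_nonneg_left h2 (by positivity)
    have : ∑ j ∈ Finset.univ.erase k, (c j : ℝ) * (Real.exp b * Real.exp (q k))
        = ((N:ℝ) - (c k : ℝ)) * (Real.exp b * Real.exp (q k)) := by
      rw [← Finset.sum_mul, hsum_c]
    nlinarith [hle, this]
  have hlb : Real.exp (q k) * ((c k : ℝ) + Real.exp (-a) * ((N : ℝ) - (c k : ℝ))) ≤ S := by
    rw [hsplit]
    have hle : ∑ j ∈ Finset.univ.erase k, (c j : ℝ) * (Real.exp (-a) * Real.exp (q k))
        ≤ ∑ j ∈ Finset.univ.erase k, (c j : ℝ) * Real.exp (q j) := by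
      refine Finset.sum_le_sum fun j hj => ?_
      have hjk : j ≠ k := Finset.ne_of_mem_erase hj
      have h2 : Real.exp (-a) * Real.exp (q k) ≤ Real.exp (q j) := by
        rw [← Real.exp_add]
        exact Real.exp_le_exp.2 (by linarith [(hgap j hjk).1])
      exact mul_le_mul_of_nonneg_left h2 (by positivity)
    have : ∑ j ∈ Finset.univ.erase k, (c j : ℝ) * (Real.exp (-a) * Real.exp (q k))
        = ((N:ℝ) - (c k : ℝ)) * (Real.exp (-a) * Real.exp (q k)) := by
      rw [← Finset.sum_mul, hsum_c]
    nlinarith [hle, this]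
  have hSpos : 0 < S := by
    have : 0 < Real.exp (q k) * ((c k : ℝ) + Real.exp (-a) * ((N : ℝ) - (c k : ℝ))) := by
      have : 0 ≤ Real.exp (-a) * ((N : ℝ) - (c k : ℝ)) := by
        apply mul_nonneg (Real.exp_pos _).le; linarith
      positivity
    linarith
  have hratio : 1 ≤ (N : ℝ) / (c k : ℝ) := (one_le_div hck).2 hNk
  have hDb : 0 < Real.exp b * ((N : ℝ) / (c k : ℝ) - 1) + 1 := by
    have : 0 ≤ Real.exp b * ((N : ℝ) / (c k : ℝ) - 1) := by
      apply mul_nonneg (Real.exp_pos _).le; linarith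
    linarith
  have hDa : 0 < Real.exp (-a) * ((N : ℝ) / (c k : ℝ) - 1) + 1 := by
    have : 0 ≤ Real.exp (-a) * ((N : ℝ) / (c k : ℝ) - 1) := by
      apply mul_nonneg (Real.exp_pos _).le; linarith
    linarith
  have hckDb : (c k : ℝ) * Real.exp (q k) * (Real.exp b * ((N : ℝ) / (c k : ℝ) - 1) + 1)
      = Real.exp (q k) * ((c k : ℝ) + Real.exp b * ((N : ℝ) - (c k : ℝ))) := by
    field_simp; ring
  have hckDa : (c k : ℝ) * Real.exp (q k) * (Real.exp (-a) * ((N : ℝ) / (c k : ℝ) - 1) + 1)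
      = Real.exp (q k) * ((c k : ℝ) + Real.exp (-a) * ((N : ℝ) - (c k : ℝ))) := by
    field_simp; ring
  constructor
  · rw [Attn, ← hSdef, div_le_div_iff₀ hDb hSpos]
    calc 1 * S = S := one_mul S
    _ ≤ Real.exp (q k) * ((c k : ℝ) + Real.exp b * ((N : ℝ) - (c k : ℝ))) := hub
    _ = (c k : ℝ) * Real.exp (q k) * (Real.exp b * ((N : ℝ) / (c k : ℝ) - 1) + 1) := hckDb.symm
  · rw [Attn, ← hSdef, div_le_div_iff₀ hSpos hDa]
    calc (c k : ℝ) * Real.exp (q k) * (Real.exp (-a) * ((N : ℝ) / (c k : ℝ) - 1) + 1)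
        = Real.exp (q k) * ((c k : ℝ) + Real.exp (-a) * ((N : ℝ) - (c k : ℝ))) := hckDa
    _ ≤ S := hlb
    _ = 1 * S := (one_mul S).symm
end

section
/- Suppose there are reals 0 < a ≤ M such that a ≤ f_k − f_m ≤ M for every m ≠ k. Then the squared prediction error is controlled on both sides by the attention paid to the wrong features: a² · (1 − Attn_k(q))² ≤ (ŷ(q) − f_k)² ≤ M² · (1 − Attn_k(q))². -/
/-- The attention prediction `ŷ(q) = Σ_m Attn_m(q) · f_m`. -/
noncomputable def yhat {K : ℕ} (c : Fin K → ℕ) (f : Fin K → ℝ) (q : Fin K → ℝ) : ℝ :=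
  ∑ m, Attn c q m * f m

/-- If `a ≤ f_k − f_m ≤ M` for every `m ≠ k` (with `0 < a ≤ M`), then
`a²·(1 − Attn_k(q))² ≤ (ŷ(q) − f_k)² ≤ M²·(1 − Attn_k(q))²`. -/
theorem sq_error_sandwich (K : ℕ) (hK : 2 ≤ K)
    (c : Fin K → ℕ) (hc : ∀ m, 1 ≤ c m)
    (q : Fin K → ℝ) (f : Fin K → ℝ) (k : Fin K)
    (a M : ℝ) (ha : 0 < a) (haM : a ≤ M)
    (hgap : ∀ m, m ≠ k → a ≤ f k - f m ∧ f k - f m ≤ M) :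
    a ^ 2 * (1 - Attn c q k) ^ 2 ≤ (yhat c f q - f k) ^ 2 ∧
    (yhat c f q - f k) ^ 2 ≤ M ^ 2 * (1 - Attn c q k) ^ 2 := by
  have hSpos : 0 < ∑ j, (c j : ℝ) * Real.exp (q j) := by
    apply Finset.sum_pos
    · intro j _
      have : (0:ℝ) < c j := by exact_mod_cast hc j
      exact mul_pos this (Real.exp_pos _)
    · exact ⟨k, Finset.mem_univ k⟩
  have hAnn : ∀ m, 0 ≤ Attn c q m := by
    intro m
    apply div_nonneg _ hSpos.le
    positivity
  have hsum1 : ∑ m, Attn c q m = 1 := by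
    unfold Attn
    rw [← Finset.sum_div, div_self hSpos.ne']
  have h1A : 1 - Attn c q k = ∑ m ∈ Finset.univ.erase k, Attn c q m := by
    rw [← hsum1, ← Finset.add_sum_erase _ _ (Finset.mem_univ k)]
    ring
  have hdiff : f k - yhat c f q = ∑ m ∈ Finset.univ.erase k, Attn c q m * (f k - f m) := by
    have : f k - yhat c f q = ∑ m, Attn c q m * (f k - f m) := by
      unfold yhat
      have h2 : ∑ m, Attn c q m * (f k - f m)
          = (∑ m, Attn c q m) * f k - ∑ m, Attn c q m * f m := by
        rw [Finset.sum_mul, ← Finset.sum_sub_distrib]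
        congr 1; ext m; ring
      rw [h2, hsum1]; ring
    rw [this, ← Finset.add_sum_erase _ _ (Finset.mem_univ k)]
    simp
  have hlow : a * (1 - Attn c q k) ≤ f k - yhat c f q := by
    rw [hdiff, h1A, Finset.mul_sum]
    apply Finset.sum_le_sum
    intro m hm
    have hmk : m ≠ k := (Finset.mem_erase.mp hm).1
    rw [mul_comm a]
    exact mul_le_mul_of_nonneg_left (hgap m hmk).1 (hAnn m)
  have hhigh : f k - yhat c f q ≤ M * (1 - Attn c q k) := by
    rw [hdiff, h1A, Finset.mul_sum]
    apply Finset.sum_le_sum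
    intro m hm
    have hmk : m ≠ k := (Finset.mem_erase.mp hm).1
    rw [mul_comm M]
    exact mul_le_mul_of_nonneg_left (hgap m hmk).2 (hAnn m)
  have hAle : 0 ≤ 1 - Attn c q k := by
    rw [h1A]
    exact Finset.sum_nonneg fun m _ => hAnn m
  have hsq : (yhat c f q - f k) ^ 2 = (f k - yhat c f q) ^ 2 := by ring
  have hlnn : 0 ≤ a * (1 - Attn c q k) := mul_nonneg ha.le hAle
  constructor
  · rw [hsq, show a ^ 2 * (1 - Attn c q k) ^ 2 = (a * (1 - Attn c q k)) ^ 2 by ring]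
    exact pow_le_pow_left₀ hlnn hlow 2
  · rw [hsq, show M ^ 2 * (1 - Attn c q k) ^ 2 = (M * (1 - Attn c q k)) ^ 2 by ring]
    exact pow_le_pow_left₀ (hlnn.trans hlow) hhigh 2
end

section
/- The partial derivative of the squared prediction loss with respect to the target logit satisfies the exact formula ∂ℓ/∂q_k = −Attn_k(q) · (ŷ(q) − f_k)², which is always ≤ 0. Consequently, for any step size η ≥ 0, a gradient-descent step q'_k = q_k − η · ∂ℓ/∂q_k never decreases the target logit: q'_k ≥ q_k. -/
/-- The squared prediction loss `ℓ(q) = ½·(ŷ(q) − f_k)²`. -/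
noncomputable def loss {K : ℕ} (c : Fin K → ℕ) (f : Fin K → ℝ) (k : Fin K)
    (q : Fin K → ℝ) : ℝ :=
  (1 / 2) * (yhat c f q - f k) ^ 2

/-- `∂ℓ/∂q_j`: the derivative of the loss along the `j`-th coordinate direction. -/
noncomputable def pderiv {K : ℕ} (c : Fin K → ℕ) (f : Fin K → ℝ) (k : Fin K)
    (q : Fin K → ℝ) (j : Fin K) : ℝ :=
  deriv (fun t => loss c f k (Function.update q j t)) (q j)

/-- Target-logit gradient (Lemma 2): `∂ℓ/∂q_k = −Attn_k(q)·(ŷ(q) − f_k)² ≤ 0`, so a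
gradient step `q'_k = q_k − η·∂ℓ/∂q_k` with `η ≥ 0` never decreases the target logit. -/
theorem target_gradient_formula (K : ℕ) (hK : 2 ≤ K)
    (c : Fin K → ℕ) (hc : ∀ m, 1 ≤ c m)
    (q : Fin K → ℝ) (f : Fin K → ℝ) (k : Fin K) (η : ℝ) (hη : 0 ≤ η) :
    pderiv c f k q k = -(Attn c q k * (yhat c f q - f k) ^ 2) ∧
    pderiv c f k q k ≤ 0 ∧
    q k ≤ q k - η * pderiv c f k q k := by
  have hupd : Function.update q k (q k) = q := Function.update_eq_self k q
  set S : ℝ := ∑ j, (c j : ℝ) * Real.exp (q j) with hS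
  set Nm : ℝ := ∑ j, (c j : ℝ) * Real.exp (q j) * f j with hNm
  have hSpos : 0 < S := by
    apply Finset.sum_pos
    · intro j _
      have : (0:ℝ) < c j := by exact_mod_cast hc j
      exact mul_pos this (Real.exp_pos _)
    · exact ⟨k, Finset.mem_univ k⟩
  have hSne : S ≠ 0 := ne_of_gt hSpos
  -- yhat as a ratio
  have hyr : ∀ p : Fin K → ℝ,
      yhat c f p = (∑ j, (c j : ℝ) * Real.exp (p j) * f j) / (∑ j, (c j : ℝ) * Real.exp (p j)) := by
    intro p
    simp [yhat, Attn, Finset.sum_div, div_mul_eq_mul_div]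
  -- derivative of the denominator
  have hterm : ∀ j : Fin K, HasDerivAt (fun t => (c j : ℝ) * Real.exp (Function.update q k t j))
      (if j = k then (c j : ℝ) * Real.exp (q k) else 0) (q k) := by
    intro j
    rcases eq_or_ne j k with rfl | hjk
    · simpa using (Real.hasDerivAt_exp (q j)).const_mul ((c j : ℝ))
    · simp only [Function.update_apply, if_neg hjk]
      exact hasDerivAt_const (q k) ((c j : ℝ) * Real.exp (q j))
  have hden : HasDerivAt (fun t => ∑ j, (c j : ℝ) * Real.exp (Function.update q k t j))
      ((c k : ℝ) * Real.exp (q k)) (q k) := by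
    have := HasDerivAt.fun_sum (fun j (_ : j ∈ Finset.univ) => hterm j)
    simpa using this
  have htermf : ∀ j : Fin K,
      HasDerivAt (fun t => (c j : ℝ) * Real.exp (Function.update q k t j) * f j)
      (if j = k then (c j : ℝ) * Real.exp (q k) * f j else 0) (q k) := by
    intro j
    rcases eq_or_ne j k with rfl | hjk
    · simpa using ((Real.hasDerivAt_exp (q j)).const_mul ((c j : ℝ))).mul_const (f j)
    · simp only [Function.update_apply, if_neg hjk]
      exact hasDerivAt_const (q k) ((c j : ℝ) * Real.exp (q j) * f j)
  have hnum : HasDerivAt (fun t => ∑ j, (c j : ℝ) * Real.exp (Function.update q k t j) * f j)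
      ((c k : ℝ) * Real.exp (q k) * f k) (q k) := by
    have := HasDerivAt.fun_sum (fun j (_ : j ∈ Finset.univ) => htermf j)
    simpa using this
  have hdenval : (fun t => ∑ j, (c j : ℝ) * Real.exp (Function.update q k t j)) (q k) = S := by
    simp [hupd, hS]
  have hy : HasDerivAt (fun t => yhat c f (Function.update q k t))
      (((c k : ℝ) * Real.exp (q k) * f k * S - Nm * ((c k : ℝ) * Real.exp (q k))) / S ^ 2)
      (q k) := by
    have h := hnum.div hden (by rw [hupd]; exact hSne)
    have : (fun t => yhat c f (Function.update q k t)) =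
        fun t => (∑ j, (c j : ℝ) * Real.exp (Function.update q k t j) * f j) /
          (∑ j, (c j : ℝ) * Real.exp (Function.update q k t j)) := by
      funext t; exact hyr _
    rw [this]
    convert h using 2 <;> (try rfl) <;> simp [hupd, hS, hNm]
  have hl : HasDerivAt (fun t => loss c f k (Function.update q k t))
      ((1/2 : ℝ) * (2 * (yhat c f q - f k) ^ 1 *
        (((c k : ℝ) * Real.exp (q k) * f k * S - Nm * ((c k : ℝ) * Real.exp (q k))) / S ^ 2)))
      (q k) := by
    have := ((hy.sub_const (f k)).pow 2).const_mul (1/2 : ℝ)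
    simpa [loss, hupd] using this
  have hpd : pderiv c f k q k =
      (1/2 : ℝ) * (2 * (yhat c f q - f k) ^ 1 *
        (((c k : ℝ) * Real.exp (q k) * f k * S - Nm * ((c k : ℝ) * Real.exp (q k))) / S ^ 2)) :=
    hl.deriv
  have hyval : yhat c f q = Nm / S := by rw [hyr q]
  have hAttn : Attn c q k = (c k : ℝ) * Real.exp (q k) / S := rfl
  have hformula : pderiv c f k q k = -(Attn c q k * (yhat c f q - f k) ^ 2) := by
    rw [hpd, hAttn, hyval]
    field_simp
    ring
  refine ⟨hformula, ?_, ?_⟩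
  · have hA : 0 ≤ Attn c q k := by
      rw [hAttn]
      positivity
    have := mul_nonneg hA (sq_nonneg (yhat c f q - f k))
    rw [hformula]; linarith
  · have hA : 0 ≤ Attn c q k := by
      rw [hAttn]; positivity
    have hp : pderiv c f k q k ≤ 0 := by
      have := mul_nonneg hA (sq_nonneg (yhat c f q - f k))
      rw [hformula]; linarith
    nlinarith [mul_nonneg hη (neg_nonneg.mpr hp)]
end

section
/- Suppose there are reals 0 < a ≤ M with a ≤ f_k − f_m ≤ M for every m ≠ k. Then the negative gradient along the target logit is sandwiched as Attn_k(q) · (1 − Attn_k(q))² · a² ≤ −∂ℓ/∂q_k ≤ Attn_k(q) · (1 − Attn_k(q))² · M². -/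
lemma key_hasDeriv (ck B D fk : ℝ) (hck : 0 < ck) (hD : 0 < D) (t : ℝ) :
    HasDerivAt (fun t => (1/2 : ℝ) * ((ck * Real.exp t * fk + B) / (ck * Real.exp t + D) - fk) ^ 2)
      (-(ck * Real.exp t / (ck * Real.exp t + D) *
        ((ck * Real.exp t * fk + B) / (ck * Real.exp t + D) - fk) ^ 2)) t := by
  have hSpos : ∀ s : ℝ, 0 < ck * Real.exp s + D := fun s =>
    add_pos (mul_pos hck (Real.exp_pos s)) hD
  have h1 : HasDerivAt (fun s => ck * Real.exp s) (ck * Real.exp t) t :=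
    (Real.hasDerivAt_exp t).const_mul ck
  have hN : HasDerivAt (fun s => ck * Real.exp s * fk + B) (ck * Real.exp t * fk) t :=
    (h1.mul_const fk).add_const B
  have hS : HasDerivAt (fun s => ck * Real.exp s + D) (ck * Real.exp t) t := h1.add_const D
  have hdiv := hN.div hS (ne_of_gt (hSpos t))
  have hsub := hdiv.sub_const fk
  have hpow := hsub.pow 2
  have := hpow.const_mul (1/2 : ℝ)
  refine this.congr_deriv ?_
  have hS0 : (ck * Real.exp t + D) ≠ 0 := ne_of_gt (hSpos t)
  simp only [Pi.div_apply]
  rw [show ck * Real.exp t * fk * (ck * Real.exp t + D) - (ck * Real.exp t * fk + B) * (ck * Real.exp t) = -(ck * Real.exp t) * (ck * Real.exp t + D) * ((ck * Real.exp t * fk + B) / (ck * Real.exp t + D) - fk) by field_simp; ring]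
  generalize (ck * Real.exp t * fk + B) / (ck * Real.exp t + D) - fk = z
  field_simp
  ring

/-- If `a ≤ f_k − f_m ≤ M` for every `m ≠ k` (with `0 < a ≤ M`), then the negative
target-logit gradient is sandwiched as
`Attn_k·(1 − Attn_k)²·a² ≤ −∂ℓ/∂q_k ≤ Attn_k·(1 − Attn_k)²·M²`. -/
theorem target_gradient_sandwich (K : ℕ) (hK : 2 ≤ K)
    (c : Fin K → ℕ) (hc : ∀ m, 1 ≤ c m)
    (q : Fin K → ℝ) (f : Fin K → ℝ) (k : Fin K)
    (a M : ℝ) (ha : 0 < a) (haM : a ≤ M)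
    (hgap : ∀ m, m ≠ k → a ≤ f k - f m ∧ f k - f m ≤ M) :
    Attn c q k * (1 - Attn c q k) ^ 2 * a ^ 2 ≤ -(pderiv c f k q k) ∧
    -(pderiv c f k q k) ≤ Attn c q k * (1 - Attn c q k) ^ 2 * M ^ 2 := by
  classical
  set E : ℝ := (c k : ℝ) * Real.exp (q k) with hE
  set D : ℝ := ∑ j ∈ Finset.univ.erase k, (c j : ℝ) * Real.exp (q j) with hD
  set B : ℝ := ∑ j ∈ Finset.univ.erase k, (c j : ℝ) * Real.exp (q j) * f j with hB
  have hck : (0:ℝ) < (c k : ℝ) := by exact_mod_cast Nat.lt_of_lt_of_le Nat.zero_lt_one (hc k)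
  have hE0 : 0 < E := mul_pos hck (Real.exp_pos _)
  -- some j ≠ k exists
  obtain ⟨j0, hj0⟩ : ∃ j : Fin K, j ≠ k := by
    have : 1 < Fintype.card (Fin K) := by simp; omega
    exact Fintype.exists_ne_of_one_lt_card this k
  have hD0 : 0 < D := by
    apply Finset.sum_pos'
    · intro i _
      positivity
    · refine ⟨j0, Finset.mem_erase.2 ⟨hj0, Finset.mem_univ _⟩, ?_⟩
      have : (0:ℝ) < (c j0 : ℝ) := by exact_mod_cast Nat.lt_of_lt_of_le Nat.zero_lt_one (hc j0)
      positivity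
  have hSsum : ∀ t : ℝ, (∑ j, (c j : ℝ) * Real.exp (Function.update q k t j))
      = (c k : ℝ) * Real.exp t + D := by
    intro t
    rw [← Finset.add_sum_erase _ _ (Finset.mem_univ k), Function.update_self]
    congr 1
    refine Finset.sum_congr rfl fun j hj => ?_
    rw [Function.update_of_ne (Finset.ne_of_mem_erase hj)]
  have hNsum : ∀ t : ℝ, (∑ m, (c m : ℝ) * Real.exp (Function.update q k t m) * f m)
      = (c k : ℝ) * Real.exp t * f k + B := by
    intro t
    rw [← Finset.add_sum_erase _ _ (Finset.mem_univ k), Function.update_self]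
    congr 1
    refine Finset.sum_congr rfl fun j hj => ?_
    rw [Function.update_of_ne (Finset.ne_of_mem_erase hj)]
  have hyhat_upd : ∀ t : ℝ, yhat c f (Function.update q k t)
      = ((c k : ℝ) * Real.exp t * f k + B) / ((c k : ℝ) * Real.exp t + D) := by
    intro t
    unfold yhat Attn
    rw [← hNsum t, ← hSsum t, Finset.sum_div]
    exact Finset.sum_congr rfl fun m _ => div_mul_eq_mul_div _ _ _
  have hfun : (fun t => loss c f k (Function.update q k t))
      = fun t => (1/2 : ℝ) * (((c k : ℝ) * Real.exp t * f k + B)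
          / ((c k : ℝ) * Real.exp t + D) - f k) ^ 2 := by
    funext t
    unfold loss
    rw [hyhat_upd t]
  set S : ℝ := E + D with hSdef
  have hS0 : 0 < S := add_pos hE0 hD0
  have hSsum' : (∑ j, (c j : ℝ) * Real.exp (q j)) = S := by
    have := hSsum (q k)
    simpa [Function.update_eq_self] using this
  set A : ℝ := Attn c q k with hA
  have hAval : A = E / S := by rw [hA]; unfold Attn; rw [hSsum']
  set yh : ℝ := (E * f k + B) / S with hyh
  have hyhat_q : yhat c f q = yh := by
    have := hyhat_upd (q k)
    simpa [Function.update_eq_self] using this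
  have hderiv : pderiv c f k q k = -(A * (yh - f k) ^ 2) := by
    unfold pderiv
    rw [hfun]
    rw [(key_hasDeriv (c k : ℝ) B D (f k) hck hD0 (q k)).deriv]
    rw [hAval]
  -- now bounds
  have hA0 : 0 ≤ A := by rw [hAval]; positivity
  have h1A : 1 - A = D / S := by
    rw [hAval]
    field_simp
    ring
  have hgapsum : a * D ≤ f k * D - B ∧ f k * D - B ≤ M * D := by
    have heq : f k * D - B = ∑ j ∈ Finset.univ.erase k,
        (c j : ℝ) * Real.exp (q j) * (f k - f j) := by
      rw [hD, hB, Finset.mul_sum, ← Finset.sum_sub_distrib]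
      exact Finset.sum_congr rfl fun j _ => by ring
    constructor
    · rw [heq, hD, Finset.mul_sum]
      refine Finset.sum_le_sum fun j hj => ?_
      have hne := Finset.ne_of_mem_erase hj
      have := (hgap j hne).1
      have hpos : (0:ℝ) ≤ (c j : ℝ) * Real.exp (q j) := by positivity
      calc a * ((c j : ℝ) * Real.exp (q j)) = (c j : ℝ) * Real.exp (q j) * a := by ring
        _ ≤ (c j : ℝ) * Real.exp (q j) * (f k - f j) := by
            exact mul_le_mul_of_nonneg_left this hpos
    · rw [heq, hD, Finset.mul_sum]
      refine Finset.sum_le_sum fun j hj => ?_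
      have hne := Finset.ne_of_mem_erase hj
      have := (hgap j hne).2
      have hpos : (0:ℝ) ≤ (c j : ℝ) * Real.exp (q j) := by positivity
      calc (c j : ℝ) * Real.exp (q j) * (f k - f j)
          ≤ (c j : ℝ) * Real.exp (q j) * M := mul_le_mul_of_nonneg_left this hpos
        _ = M * ((c j : ℝ) * Real.exp (q j)) := by ring
  have hdiff : f k - yh = (f k * D - B) / S := by
    rw [hyh]
    field_simp
    ring
  have h1Apos : 0 ≤ 1 - A := by rw [h1A]; positivity
  have hlow : a * (1 - A) ≤ f k - yh := by
    rw [hdiff, h1A, ← mul_div_assoc]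
    exact (div_le_div_iff_of_pos_right hS0).2 hgapsum.1
  have hhigh : f k - yh ≤ M * (1 - A) := by
    rw [hdiff, h1A, ← mul_div_assoc]
    exact (div_le_div_iff_of_pos_right hS0).2 hgapsum.2
  have h0 : 0 ≤ a * (1 - A) := mul_nonneg ha.le h1Apos
  have hsq1 : (a * (1 - A)) ^ 2 ≤ (f k - yh) ^ 2 := pow_le_pow_left₀ h0 hlow 2
  have hsq2 : (f k - yh) ^ 2 ≤ (M * (1 - A)) ^ 2 :=
    pow_le_pow_left₀ (le_trans h0 hlow) hhigh 2
  have hnp : -(pderiv c f k q k) = A * (f k - yh) ^ 2 := by rw [hderiv]; ring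
  constructor
  · calc A * (1 - A) ^ 2 * a ^ 2 = A * (a * (1 - A)) ^ 2 := by ring
      _ ≤ A * (f k - yh) ^ 2 := mul_le_mul_of_nonneg_left hsq1 hA0
      _ = -(pderiv c f k q k) := hnp.symm
  · calc -(pderiv c f k q k) = A * (f k - yh) ^ 2 := hnp
      _ ≤ A * (M * (1 - A)) ^ 2 := mul_le_mul_of_nonneg_left hsq2 hA0
      _ = A * (1 - A) ^ 2 * M ^ 2 := by ring
end

section
/- Assume K ≥ 2, reals 0 < u ≤ 1 ≤ U < K, and counts satisfying u·N/K ≤ c_j ≤ U·N/K for every j. If the logits satisfy 0 ≤ q_k ≤ log K and |q_m| ≤ q_k / K for every m ≠ k, then the target attention is bounded below by Attn_k(q) ≥ 1 / (e · (K/u − 1) + 1) (hence Attn_k(q) = Ω(1/K)), and the residual attention is bounded below by 1 − Attn_k(q) ≥ (K/U − 1) / (2K + (K/U − 1)). -/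
set_option maxHeartbeats 1000000


/-- Phase I attention bounds (Lemma C.1): with balanced counts
`u·N/K ≤ c_j ≤ U·N/K` (`0 < u ≤ 1 ≤ U < K`), `0 ≤ q_k ≤ log K`, and
`|q_m| ≤ q_k/K` for `m ≠ k`, the target attention satisfies
`Attn_k(q) ≥ 1/(e·(K/u − 1) + 1)` and
`1 − Attn_k(q) ≥ (K/U − 1)/(2K + (K/U − 1))`. -/
theorem phaseI_attention_bounds (K : ℕ) (hK : 2 ≤ K)
    (c : Fin K → ℕ) (hc : ∀ m, 1 ≤ c m) (N : ℕ) (hN : N = ∑ m, c m)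
    (u U : ℝ) (hu : 0 < u) (hu1 : u ≤ 1) (h1U : 1 ≤ U) (hUK : U < (K : ℝ))
    (hcnt : ∀ j, u * (N : ℝ) / (K : ℝ) ≤ (c j : ℝ) ∧ (c j : ℝ) ≤ U * (N : ℝ) / (K : ℝ))
    (q : Fin K → ℝ) (k : Fin K)
    (hq0 : 0 ≤ q k) (hqk : q k ≤ Real.log K)
    (hqm : ∀ m, m ≠ k → |q m| ≤ q k / (K : ℝ)) :
    1 / (Real.exp 1 * ((K : ℝ) / u - 1) + 1) ≤ Attn c q k ∧
    ((K : ℝ) / U - 1) / (2 * (K : ℝ) + ((K : ℝ) / U - 1)) ≤ 1 - Attn c q k := by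
  have hK0 : (0:ℝ) < K := by exact_mod_cast (by omega : 0 < K)
  have hK2 : (2:ℝ) ≤ K := by exact_mod_cast hK
  have hU0 : (0:ℝ) < U := lt_of_lt_of_le one_pos h1U
  have hEpos : 0 < Real.exp (q k) := Real.exp_pos _
  set E := Real.exp (q k) with hEdef
  set S := ∑ j, (c j : ℝ) * Real.exp (q j) with hSdef
  have hcpos : ∀ j, (0:ℝ) < (c j : ℝ) := fun j => by exact_mod_cast hc j
  have hSpos : 0 < S :=
    Finset.sum_pos (fun j _ => mul_pos (hcpos j) (Real.exp_pos _)) ⟨k, Finset.mem_univ k⟩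
  have hNsum : (N:ℝ) = ∑ j, (c j : ℝ) := by rw [hN]; push_cast; rfl
  have hqle : ∀ j, q j ≤ q k := by
    intro j
    by_cases h : j = k
    · subst h; exact le_refl _
    · calc q j ≤ |q j| := le_abs_self _
        _ ≤ q k / K := hqm j h
        _ ≤ q k := div_le_self hq0 (by linarith)
  have hSle : S ≤ (N:ℝ) * E := by
    calc S ≤ ∑ j, (c j : ℝ) * E :=
          Finset.sum_le_sum fun j _ =>
            mul_le_mul_of_nonneg_left (Real.exp_le_exp.mpr (hqle j)) (hcpos j).le
      _ = (∑ j, (c j : ℝ)) * E := (Finset.sum_mul _ _ _).symm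
      _ = (N:ℝ) * E := by rw [← hNsum]
  have hAttn : Attn c q k = (c k : ℝ) * E / S := rfl
  have hckl : u * N / K ≤ (c k : ℝ) := (hcnt k).1
  have hcku : (c k : ℝ) ≤ U * N / K := (hcnt k).2
  have hckK : (c k : ℝ) * K ≤ U * N := (le_div_iff₀ hK0).mp hcku
  have huNK : u * N ≤ (c k : ℝ) * K := by
    have := (div_le_iff₀ hK0).mp hckl; linarith
  constructor
  · -- first bound
    have hKu2 : (2:ℝ) ≤ (K:ℝ)/u := by
      rw [le_div_iff₀ hu]; nlinarith
    have he1 : (1:ℝ) ≤ Real.exp 1 := by nlinarith [Real.add_one_le_exp 1]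
    have hD : (K:ℝ)/u ≤ Real.exp 1 * ((K:ℝ)/u - 1) + 1 := by nlinarith
    have step1 : 1 / (Real.exp 1 * ((K : ℝ) / u - 1) + 1) ≤ 1 / ((K:ℝ)/u) :=
      one_div_le_one_div_of_le (by linarith) hD
    have h1div : 1 / ((K:ℝ)/u) = u / K := one_div_div _ _
    have step2 : u / (K:ℝ) ≤ Attn c q k := by
      rw [hAttn, div_le_div_iff₀ hK0 hSpos]
      have h1 : u * S ≤ u * ((N:ℝ) * E) := mul_le_mul_of_nonneg_left hSle hu.le
      have h2 : u * N * E ≤ (c k : ℝ) * K * E := mul_le_mul_of_nonneg_right huNK hEpos.le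
      nlinarith
    linarith [h1div ▸ step1]
  · -- second bound
    have hexpK : E ≤ (K:ℝ) := by
      rw [hEdef, ← Real.exp_log hK0]
      exact Real.exp_le_exp.mpr hqk
    have hlogK : Real.log K ≤ K * Real.log 2 := by
      have h2K : (K:ℝ) ≤ (2:ℝ)^K := by exact_mod_cast (Nat.lt_two_pow_self (n := K)).le
      calc Real.log K ≤ Real.log ((2:ℝ)^K) := Real.log_le_log hK0 h2K
        _ = K * Real.log 2 := by rw [Real.log_pow]
    have hlow : ∀ j, j ≠ k → (1:ℝ)/2 ≤ Real.exp (q j) := by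
      intro j hj
      have h1 : -(q k / K) ≤ q j := (abs_le.mp (hqm j hj)).1
      have h2 : q k / K ≤ Real.log 2 := by
        rw [div_le_iff₀ hK0]
        calc q k ≤ Real.log K := hqk
          _ ≤ Real.log 2 * K := by linarith
      calc (1:ℝ)/2 = Real.exp (-(Real.log 2)) := by
            rw [Real.exp_neg, Real.exp_log (by norm_num : (0:ℝ) < 2)]; norm_num
        _ ≤ Real.exp (q j) := Real.exp_le_exp.mpr (by linarith)
    have hsplit : S = (c k : ℝ) * E + ∑ j ∈ Finset.univ.erase k, (c j : ℝ) * Real.exp (q j) := by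
      rw [hSdef]; exact (Finset.add_sum_erase _ _ (Finset.mem_univ k)).symm
    have hNsplit : (N:ℝ) = (c k : ℝ) + ∑ j ∈ Finset.univ.erase k, (c j : ℝ) := by
      rw [hNsum]; exact (Finset.add_sum_erase _ _ (Finset.mem_univ k)).symm
    have hBlow : ((N:ℝ) - c k) * (1/2) ≤ S - (c k : ℝ) * E := by
      have hsum : ∑ j ∈ Finset.univ.erase k, (c j : ℝ) * (1/2)
          ≤ ∑ j ∈ Finset.univ.erase k, (c j : ℝ) * Real.exp (q j) :=
        Finset.sum_le_sum fun j hj =>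
          mul_le_mul_of_nonneg_left (hlow j (Finset.ne_of_mem_erase hj)) (hcpos j).le
      have heq : ∑ j ∈ Finset.univ.erase k, (c j : ℝ) * (1/2) = ((N:ℝ) - c k) * (1/2) := by
        rw [← Finset.sum_mul, show (∑ j ∈ Finset.univ.erase k, (c j : ℝ)) = (N:ℝ) - c k from by linarith]
      linarith [hsplit]
    have hAub : (c k : ℝ) * E ≤ U * N := by
      have h1 : (c k : ℝ) * E ≤ (c k : ℝ) * K := mul_le_mul_of_nonneg_left hexpK (hcpos k).le
      linarith
    have hrw : ((K : ℝ) / U - 1) / (2 * (K : ℝ) + ((K : ℝ) / U - 1))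
        = ((K:ℝ) - U) / (2 * K * U + ((K:ℝ) - U)) := by
      rw [div_eq_div_iff]
      · field_simp
      · have : (1:ℝ) < (K:ℝ)/U := (one_lt_div hU0).mpr hUK
        nlinarith
      · nlinarith
    have hden : (0:ℝ) < 2 * K * U + ((K:ℝ) - U) := by nlinarith
    rw [hAttn, hrw, show 1 - (c k : ℝ) * E / S = (S - (c k : ℝ) * E) / S from by field_simp,
      div_le_div_iff₀ hden hSpos]
    have f1 : ((K:ℝ) - U) * ((c k : ℝ) * E) ≤ ((K:ℝ) - U) * (U * N) :=
      mul_le_mul_of_nonneg_left hAub (by linarith)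
    have f2 : ((N:ℝ) - c k) * (1/2) * (2 * K * U) ≤ (S - (c k : ℝ) * E) * (2 * K * U) :=
      mul_le_mul_of_nonneg_right hBlow (by positivity)
    have f3 : (c k : ℝ) * K * U ≤ U * N * U := mul_le_mul_of_nonneg_right hckK hU0.le
    nlinarith
end

section
/- Let ε' > 0 and u > 0, suppose c_k ≥ u·N/K, and suppose the logit gaps satisfy q_k − q_m ≥ log K + log(1/ε') for every m ≠ k. Then the attention paid to features other than the query's own feature satisfies 1 − Attn_k(q) ≤ ε' · (K/u − 1) / K ≤ ε' / u. -/
/-- End-of-phase attention bound: if `c_k ≥ u·N/K` and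
`q_k − q_m ≥ log K + log(1/ε')` for every `m ≠ k`, then
`1 − Attn_k(q) ≤ ε'·(K/u − 1)/K ≤ ε'/u`. -/
theorem end_of_phase_attention_bound (K : ℕ) (hK : 2 ≤ K)
    (c : Fin K → ℕ) (hc : ∀ m, 1 ≤ c m) (N : ℕ) (hN : N = ∑ m, c m)
    (q : Fin K → ℝ) (k : Fin K) (ε' u : ℝ) (hε' : 0 < ε') (hu : 0 < u)
    (hck : u * (N : ℝ) / (K : ℝ) ≤ (c k : ℝ))
    (hgap : ∀ m, m ≠ k → Real.log K + Real.log (1 / ε') ≤ q k - q m) :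
    1 - Attn c q k ≤ ε' * ((K : ℝ) / u - 1) / (K : ℝ) ∧
    ε' * ((K : ℝ) / u - 1) / (K : ℝ) ≤ ε' / u := by
  have hKpos : (0 : ℝ) < K := by positivity
  have hK1 : (1 : ℝ) ≤ K := by exact_mod_cast Nat.one_le_of_lt hK
  set S : ℝ := ∑ j, (c j : ℝ) * Real.exp (q j) with hS
  set e : ℝ := Real.exp (q k) with he
  have hepos : 0 < e := Real.exp_pos _
  have hckpos : (0 : ℝ) < (c k : ℝ) := by exact_mod_cast hc k
  set off : ℝ := ∑ m ∈ Finset.univ.erase k, (c m : ℝ) * Real.exp (q m) with hoff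
  have hsplit : (c k : ℝ) * e + off = S :=
    Finset.add_sum_erase Finset.univ
      (fun m => (c m : ℝ) * Real.exp (q m)) (Finset.mem_univ k)
  have hoffnn : 0 ≤ off := Finset.sum_nonneg fun m _ => by positivity
  have hSpos : 0 < S := by nlinarith
  have hSk : (c k : ℝ) * e ≤ S := by nlinarith
  -- sum of counts over the erased set
  have hNsum : (N : ℝ) = (c k : ℝ) + ∑ m ∈ Finset.univ.erase k, (c m : ℝ) := by
    rw [hN]
    push_cast
    exact (Finset.add_sum_erase Finset.univ (fun m => (c m : ℝ)) (Finset.mem_univ k)).symm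
  -- termwise bound on off sum
  have hterm : ∀ m ∈ Finset.univ.erase k,
      (c m : ℝ) * Real.exp (q m) ≤ (c m : ℝ) * (e * (ε' / K)) := by
    intro m hm
    have hmk : m ≠ k := (Finset.mem_erase.mp hm).1
    have hg := hgap m hmk
    have : Real.exp (q m) ≤ e * (ε' / K) := by
      have h1 : q m ≤ q k - (Real.log K + Real.log (1 / ε')) := by linarith
      calc Real.exp (q m) ≤ Real.exp (q k - (Real.log K + Real.log (1 / ε'))) :=
            Real.exp_le_exp.mpr h1
        _ = e * (ε' / K) := by
            rw [Real.exp_sub, Real.exp_add, Real.exp_log hKpos,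
              Real.exp_log (by positivity : (0:ℝ) < 1 / ε')]
            field_simp
            exact he.symm
    nlinarith [Nat.cast_nonneg (c m) (α := ℝ)]
  have hoffle : off ≤ ((N : ℝ) - (c k : ℝ)) * (e * (ε' / K)) := by
    calc off ≤ ∑ m ∈ Finset.univ.erase k, (c m : ℝ) * (e * (ε' / K)) :=
          Finset.sum_le_sum hterm
      _ = (∑ m ∈ Finset.univ.erase k, (c m : ℝ)) * (e * (ε' / K)) := by
          rw [Finset.sum_mul]
      _ = ((N : ℝ) - (c k : ℝ)) * (e * (ε' / K)) := by
          rw [hNsum]; ring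
  -- N / c_k ≤ K / u
  have hNck : (N : ℝ) * u ≤ (K : ℝ) * (c k : ℝ) := by
    have := (div_le_iff₀ hKpos).mp hck
    nlinarith
  have hAttn : 1 - Attn c q k = off / S := by
    rw [Attn, ← hS, ← he]
    rw [eq_div_iff (ne_of_gt hSpos)]
    field_simp
    linarith [hsplit]
  have hNck' : (c k : ℝ) ≤ (N : ℝ) := by
    rw [hNsum]
    have : 0 ≤ ∑ m ∈ Finset.univ.erase k, (c m : ℝ) :=
      Finset.sum_nonneg fun m _ => Nat.cast_nonneg _
    linarith
  have hNck0 : (0:ℝ) ≤ (N : ℝ) - (c k : ℝ) := by linarith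
  constructor
  · have h1 : off / S ≤ (((N : ℝ) - (c k : ℝ)) * (e * (ε' / K))) / ((c k : ℝ) * e) := by
      apply div_le_div₀ (by positivity) hoffle (by positivity) hSk
    have key : ((N:ℝ) - (c k : ℝ)) * u ≤ ((K:ℝ) - u) * (c k : ℝ) := by nlinarith
    have hLHSeq : (((N:ℝ) - (c k : ℝ)) * (e * (ε' / K))) / ((c k : ℝ) * e)
        = ε' / K * (((N:ℝ) - (c k : ℝ)) / (c k : ℝ)) := by
      field_simp
    have hRHSeq : ε' * ((K : ℝ) / u - 1) / (K : ℝ)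
        = ε' / K * (((K:ℝ) - u) / u) := by
      rw [div_mul_div_comm, div_eq_div_iff (by positivity) (by positivity)]
      field_simp
    rw [hLHSeq] at h1
    rw [hRHSeq]
    have h2 : ((N:ℝ) - (c k : ℝ)) / (c k : ℝ) ≤ ((K:ℝ) - u) / u :=
      (div_le_div_iff₀ hckpos hu).mpr key
    calc 1 - Attn c q k ≤ ε' / K * (((N:ℝ) - (c k : ℝ)) / (c k : ℝ)) := by
          rw [hAttn]; exact h1
      _ ≤ ε' / K * (((K:ℝ) - u) / u) :=
          mul_le_mul_of_nonneg_left h2 (by positivity)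
  · have h3 : ε' * ((K : ℝ) / u - 1) / (K : ℝ) = ε' / u - ε' / K := by
      field_simp
    rw [h3]
    have : 0 ≤ ε' / K := by positivity
    linarith
end

section
/- Let x_1, …, x_N be independent identically distributed random variables with values in Fin K and P(x_i = k) = p_k, where p : Fin K → [0,1] sums to 1, and let |V_k| = #{i : x_i = k}. If K ≥ 1 and δ ≥ √(20·K/N), then with probability at least 1 − 3·exp(−δ²·N/25), every k ∈ Fin K simultaneously satisfies (p_k − δ)·N ≤ |V_k| ≤ (p_k + δ)·N. -/
open MeasureTheory ProbabilityTheory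


lemma mgf_indicator_aux {Ω : Type*} [MeasureSpace Ω] [IsProbabilityMeasure (ℙ : Measure Ω)]
    {A : Set Ω} (hA : MeasurableSet A) (t : ℝ) :
    Integrable (fun ω => Real.exp (t * A.indicator (fun _ => (1:ℝ)) ω)) ℙ ∧
      ∫ ω, Real.exp (t * A.indicator (fun _ => (1:ℝ)) ω) ∂ℙ
        = 1 + (Real.exp t - 1) * (ℙ A).toReal := by
  have hfun : (fun ω => Real.exp (t * A.indicator (fun _ => (1:ℝ)) ω))
      = fun ω => 1 + A.indicator (fun _ => Real.exp t - 1) ω := by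
    funext ω
    by_cases h : ω ∈ A <;> simp [h]
  constructor
  · rw [hfun]
    exact (integrable_const 1).add ((integrable_const _).indicator hA)
  · rw [hfun, integral_add (integrable_const 1) ((integrable_const _).indicator hA)]
    simp [integral_indicator_const _ hA, mul_comm, Measure.real]

lemma exp_quad_bound {t : ℝ} (ht : |t| ≤ 1) : Real.exp t ≤ 1 + t + (3/4) * t ^ 2 := by
  have h := Real.exp_bound ht (n := 2) (by norm_num)
  have h2 : ∑ m ∈ Finset.range 2, t ^ m / m.factorial = 1 + t := by
    simp [Finset.sum_range_succ]
  rw [h2] at h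
  have h4 := (abs_sub_le_iff.1 h).1
  norm_num at h4
  nlinarith [sq_abs t]

lemma class_tail_bound {Ω : Type*} [MeasureSpace Ω] [IsProbabilityMeasure (ℙ : Measure Ω)]
    {K N : ℕ} (x : Fin N → Ω → Fin K) (hmeas : ∀ i, Measurable (x i))
    (hindep : iIndepFun x ℙ)
    (k : Fin K) (q : ℝ) (hq0 : 0 ≤ q) (hq1 : q ≤ 1)
    (hdist : ∀ i, (ℙ {ω | x i ω = k}).toReal = q)
    (δ : ℝ) (hδ0 : 0 ≤ δ) (hδ1 : δ < 1) :
    (ℙ {ω | (q + δ) * (N:ℝ) ≤ ((Finset.univ.filter (fun i => x i ω = k)).card : ℝ)}).toReal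
      + (ℙ {ω | ((Finset.univ.filter (fun i => x i ω = k)).card : ℝ) ≤ (q - δ) * (N:ℝ)}).toReal
      ≤ 2 * Real.exp (-(5/16) * δ^2 * (N:ℝ)) := by
  classical
  set A : Fin N → Set Ω := fun i => {ω | x i ω = k} with hAdef
  have hA : ∀ i, MeasurableSet (A i) := fun i => hmeas i (measurableSet_singleton k)
  set Y : Fin N → Ω → ℝ := fun i => (A i).indicator (fun _ => (1:ℝ)) with hYdef
  have hYm : ∀ i, Measurable (Y i) := fun i => measurable_const.indicator (hA i)
  set g : Fin K → ℝ := fun j => if j = k then 1 else 0 with hgdef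
  have hYeq : Y = fun i => g ∘ x i := by
    funext i ω
    by_cases h : x i ω = k <;>
      simp [hYdef, hgdef, hAdef, h, Set.indicator_of_mem, Set.indicator_of_notMem,
        Set.mem_setOf_eq]
  have hYindep : iIndepFun Y ℙ := by
    rw [hYeq]
    exact hindep.comp (fun _ => g) (fun _ => measurable_of_countable g)
  have hint : ∀ (t : ℝ) i, Integrable (fun ω => Real.exp (t * Y i ω)) ℙ :=
    fun t i => (mgf_indicator_aux (hA i) t).1
  have hintS : ∀ t : ℝ, Integrable (fun ω => Real.exp (t * (∑ i, Y i) ω)) ℙ :=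
    fun t => hYindep.integrable_exp_mul_sum hYm (fun i _ => hint t i)
  have hmgf : ∀ t : ℝ, mgf (∑ i, Y i) ℙ t = (1 + (Real.exp t - 1) * q) ^ N := by
    intro t
    rw [hYindep.mgf_sum hYm Finset.univ]
    have : ∀ i : Fin N, mgf (Y i) ℙ t = 1 + (Real.exp t - 1) * q := by
      intro i
      have := (mgf_indicator_aux (hA i) t).2
      rw [mgf, this, hdist i]
    rw [Finset.prod_congr rfl (fun i _ => this i)]
    simp
  have hN0 : (0:ℝ) ≤ N := Nat.cast_nonneg N
  have hS : ∀ ω, ((Finset.univ.filter (fun i => x i ω = k)).card : ℝ) = (∑ i, Y i) ω := by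
    intro ω
    rw [Finset.card_filter]
    push_cast
    rw [Finset.sum_apply]
    refine Finset.sum_congr rfl fun i _ => ?_
    by_cases h : x i ω = k <;> simp [hYdef, hAdef, h]
  -- mgf bound for |t| ≤ 1
  have hmgfb : ∀ t : ℝ, |t| ≤ 1 →
      mgf (∑ i, Y i) ℙ t ≤ Real.exp ((N:ℝ) * (q * (t + (3/4) * t ^ 2))) := by
    intro t ht
    rw [hmgf t]
    have h1 : 1 + (Real.exp t - 1) * q ≤ Real.exp ((Real.exp t - 1) * q) := by
      have := Real.add_one_le_exp ((Real.exp t - 1) * q); linarith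
    have h0 : 0 ≤ 1 + (Real.exp t - 1) * q := by
      have he : -1 ≤ Real.exp t - 1 := by have := Real.exp_pos t; linarith
      nlinarith
    calc (1 + (Real.exp t - 1) * q) ^ N ≤ Real.exp ((Real.exp t - 1) * q) ^ N := by
          exact pow_le_pow_left₀ h0 h1 N
      _ = Real.exp ((N:ℝ) * ((Real.exp t - 1) * q)) := by
          rw [← Real.exp_nat_mul]
      _ ≤ Real.exp ((N:ℝ) * (q * (t + (3/4) * t ^ 2))) := by
          apply Real.exp_le_exp.2
          have hq' : (Real.exp t - 1) * q ≤ (t + (3/4) * t ^ 2) * q :=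
            mul_le_mul_of_nonneg_right (by have := exp_quad_bound ht; linarith) hq0
          have := mul_le_mul_of_nonneg_left hq' hN0
          nlinarith
  have ht1 : |δ/2| ≤ 1 := by rw [abs_of_nonneg (by linarith)]; linarith
  have ht1' : |-(δ/2)| ≤ 1 := by rwa [abs_neg]
  -- upper tail
  have hup : (ℙ {ω | (q + δ) * (N:ℝ) ≤
        ((Finset.univ.filter (fun i => x i ω = k)).card : ℝ)}).toReal
      ≤ Real.exp (-(5/16) * δ^2 * (N:ℝ)) := by
    have hset : {ω | (q + δ) * (N:ℝ) ≤
        ((Finset.univ.filter (fun i => x i ω = k)).card : ℝ)}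
        = {ω | (q + δ) * (N:ℝ) ≤ (∑ i, Y i) ω} := by
      ext ω; rw [Set.mem_setOf_eq, Set.mem_setOf_eq, hS ω]
    rw [hset]
    calc (ℙ {ω | (q + δ) * (N:ℝ) ≤ (∑ i, Y i) ω}).toReal
        ≤ Real.exp (-(δ/2) * ((q + δ) * (N:ℝ))) * mgf (∑ i, Y i) ℙ (δ/2) :=
          measure_ge_le_exp_mul_mgf _ (by linarith) (hintS _)
      _ ≤ Real.exp (-(δ/2) * ((q + δ) * (N:ℝ))) *
            Real.exp ((N:ℝ) * (q * ((δ/2) + (3/4) * (δ/2) ^ 2))) := by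
          exact mul_le_mul_of_nonneg_left (hmgfb _ ht1) (Real.exp_pos _).le
      _ = Real.exp (-(δ/2) * ((q + δ) * (N:ℝ)) +
            (N:ℝ) * (q * ((δ/2) + (3/4) * (δ/2) ^ 2))) := (Real.exp_add _ _).symm
      _ ≤ Real.exp (-(5/16) * δ^2 * (N:ℝ)) := by
          apply Real.exp_le_exp.2
          nlinarith [sq_nonneg δ, mul_nonneg (sq_nonneg δ) hN0]
  -- lower tail
  have hlo : (ℙ {ω | ((Finset.univ.filter (fun i => x i ω = k)).card : ℝ)
        ≤ (q - δ) * (N:ℝ)}).toReal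
      ≤ Real.exp (-(5/16) * δ^2 * (N:ℝ)) := by
    have hset : {ω | ((Finset.univ.filter (fun i => x i ω = k)).card : ℝ) ≤ (q - δ) * (N:ℝ)}
        = {ω | (∑ i, Y i) ω ≤ (q - δ) * (N:ℝ)} := by
      ext ω; rw [Set.mem_setOf_eq, Set.mem_setOf_eq, hS ω]
    rw [hset]
    calc (ℙ {ω | (∑ i, Y i) ω ≤ (q - δ) * (N:ℝ)}).toReal
        ≤ Real.exp (-(-(δ/2)) * ((q - δ) * (N:ℝ))) * mgf (∑ i, Y i) ℙ (-(δ/2)) :=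
          measure_le_le_exp_mul_mgf _ (by linarith) (hintS _)
      _ ≤ Real.exp (-(-(δ/2)) * ((q - δ) * (N:ℝ))) *
            Real.exp ((N:ℝ) * (q * ((-(δ/2)) + (3/4) * (-(δ/2)) ^ 2))) := by
          exact mul_le_mul_of_nonneg_left (hmgfb _ ht1') (Real.exp_pos _).le
      _ = Real.exp (-(-(δ/2)) * ((q - δ) * (N:ℝ)) +
            (N:ℝ) * (q * ((-(δ/2)) + (3/4) * (-(δ/2)) ^ 2))) := (Real.exp_add _ _).symm
      _ ≤ Real.exp (-(5/16) * δ^2 * (N:ℝ)) := by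
          apply Real.exp_le_exp.2
          nlinarith [sq_nonneg δ, mul_nonneg (sq_nonneg δ) hN0]
  linarith

/-- Concentration of empirical feature counts (the event `E*`): with `N` i.i.d. tokens
taking value `k ∈ Fin K` with probability `p_k`, and `δ ≥ √(20K/N)`, with probability at
least `1 − 3·exp(−δ²N/25)` every class count `|V_k| = #{i : x_i = k}` lies in
`[(p_k − δ)·N, (p_k + δ)·N]` simultaneously. -/
theorem concentration_of_feature_counts
    {Ω : Type*} [MeasureSpace Ω] [IsProbabilityMeasure (ℙ : Measure Ω)]
    (K N : ℕ) (hK : 1 ≤ K) (hN : 1 ≤ N)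
    (p : Fin K → ℝ) (hp0 : ∀ k, 0 ≤ p k) (hp1 : ∀ k, p k ≤ 1) (hpsum : ∑ k, p k = 1)
    (x : Fin N → Ω → Fin K) (hmeas : ∀ i, Measurable (x i))
    (hindep : iIndepFun x ℙ)
    (hdist : ∀ i k, (ℙ {ω | x i ω = k}).toReal = p k)
    (δ : ℝ) (hδ : Real.sqrt (20 * (K : ℝ) / (N : ℝ)) ≤ δ) :
    1 - 3 * Real.exp (-(δ ^ 2) * (N : ℝ) / 25) ≤
      (ℙ {ω | ∀ k : Fin K,
          (p k - δ) * (N : ℝ) ≤ ((Finset.univ.filter (fun i => x i ω = k)).card : ℝ) ∧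
          ((Finset.univ.filter (fun i => x i ω = k)).card : ℝ) ≤ (p k + δ) * (N : ℝ)}).toReal := by
  classical
  have hδ0 : 0 ≤ δ := (Real.sqrt_nonneg _).trans hδ
  have hexp0 : 0 < Real.exp (-(δ ^ 2) * (N : ℝ) / 25) := Real.exp_pos _
  have hN0 : (0:ℝ) < N := by exact_mod_cast hN
  have hcardN : ∀ (ω : Ω) (k : Fin K),
      ((Finset.univ.filter (fun i => x i ω = k)).card : ℝ) ≤ (N:ℝ) := by
    intro ω k
    have h := Finset.card_filter_le (Finset.univ : Finset (Fin N)) (fun i => x i ω = k)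
    have : ((Finset.univ.filter (fun i => x i ω = k)).card : ℝ)
        ≤ ((Finset.univ : Finset (Fin N)).card : ℝ) := by exact_mod_cast h
    simpa using this
  by_cases hδ1 : 1 ≤ δ
  · -- trivial case
    have hev : {ω | ∀ k : Fin K,
        (p k - δ) * (N : ℝ) ≤ ((Finset.univ.filter (fun i => x i ω = k)).card : ℝ) ∧
        ((Finset.univ.filter (fun i => x i ω = k)).card : ℝ) ≤ (p k + δ) * (N : ℝ)}
        = Set.univ := by
      ext ω
      simp only [Set.mem_setOf_eq, Set.mem_univ, iff_true]
      intro k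
      constructor
      · have h1 : p k - δ ≤ 0 := by linarith [hp1 k]
        have h2 : (0:ℝ) ≤ ((Finset.univ.filter (fun i => x i ω = k)).card : ℝ) :=
          Nat.cast_nonneg _
        nlinarith
      · have h3 : (N:ℝ) ≤ (p k + δ) * N := by nlinarith [hp0 k]
        exact (hcardN ω k).trans h3
    rw [hev, measure_univ]
    simp only [ENNReal.toReal_one]
    linarith
  · push_neg at hδ1
    have hδ2N : 20 * (K:ℝ) ≤ δ^2 * N := by
      have h0 : (0:ℝ) ≤ 20 * (K:ℝ) / N := by positivity
      have hsq := Real.sq_sqrt h0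
      have h2 : 20 * (K:ℝ)/N ≤ δ^2 := by
        nlinarith [Real.sqrt_nonneg (20*(K:ℝ)/N)]
      rw [div_le_iff₀ hN0] at h2
      linarith
    set E : Set Ω := {ω | ∀ k : Fin K,
        (p k - δ) * (N : ℝ) ≤ ((Finset.univ.filter (fun i => x i ω = k)).card : ℝ) ∧
        ((Finset.univ.filter (fun i => x i ω = k)).card : ℝ) ≤ (p k + δ) * (N : ℝ)}
      with hEdef
    set U : Fin K → Set Ω := fun k =>
      {ω | (p k + δ) * (N:ℝ) ≤ ((Finset.univ.filter (fun i => x i ω = k)).card : ℝ)} with hUdef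
    set L : Fin K → Set Ω := fun k =>
      {ω | ((Finset.univ.filter (fun i => x i ω = k)).card : ℝ) ≤ (p k - δ) * (N:ℝ)} with hLdef
    have key : ∀ k, (ℙ (U k)).toReal + (ℙ (L k)).toReal
        ≤ 2 * Real.exp (-(5/16) * δ^2 * (N:ℝ)) := fun k =>
      class_tail_bound x hmeas hindep k (p k) (hp0 k) (hp1 k)
        (fun i => hdist i k) δ hδ0 hδ1
    -- measurability
    have hSm : ∀ k : Fin K,
        Measurable (fun ω => ((Finset.univ.filter (fun i => x i ω = k)).card : ℝ)) := by
      intro k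
      have : (fun ω => ((Finset.univ.filter (fun i => x i ω = k)).card : ℝ))
          = fun ω => ∑ i : Fin N, (if x i ω = k then (1:ℝ) else 0) := by
        funext ω
        rw [Finset.card_filter]
        push_cast
        rfl
      rw [this]
      exact Finset.measurable_sum _ fun i _ =>
        Measurable.ite (hmeas i (measurableSet_singleton k)) measurable_const measurable_const
    have hEm : MeasurableSet E := by
      have : E = ⋂ k : Fin K,
          ({ω | (p k - δ) * (N:ℝ) ≤ ((Finset.univ.filter (fun i => x i ω = k)).card : ℝ)}
            ∩ {ω | ((Finset.univ.filter (fun i => x i ω = k)).card : ℝ) ≤ (p k + δ) * (N:ℝ)}) := by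
        ext ω
        simp only [hEdef, Set.mem_setOf_eq, Set.mem_iInter, Set.mem_inter_iff]
      rw [this]
      exact MeasurableSet.iInter fun k =>
        (measurableSet_le measurable_const (hSm k)).inter
          (measurableSet_le (hSm k) measurable_const)
    -- union bound
    have hsub : Eᶜ ⊆ ⋃ k : Fin K, U k ∪ L k := by
      intro ω hω
      simp only [hEdef, Set.mem_compl_iff, Set.mem_setOf_eq, not_forall] at hω
      obtain ⟨k, hk⟩ := hω
      rcases not_and_or.1 hk with h | h
      · exact Set.mem_iUnion.2 ⟨k, Or.inr (le_of_lt (not_le.1 h))⟩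
      · exact Set.mem_iUnion.2 ⟨k, Or.inl (le_of_lt (not_le.1 h))⟩
    have hunion : ℙ Eᶜ ≤ ∑ k : Fin K, (ℙ (U k) + ℙ (L k)) :=
      calc ℙ Eᶜ ≤ ℙ (⋃ k : Fin K, U k ∪ L k) := measure_mono hsub
        _ ≤ ∑ k : Fin K, ℙ (U k ∪ L k) := measure_iUnion_fintype_le _ _
        _ ≤ ∑ k : Fin K, (ℙ (U k) + ℙ (L k)) :=
            Finset.sum_le_sum fun k _ => measure_union_le _ _
    have hsumne : (∑ k : Fin K, (ℙ (U k) + ℙ (L k))) ≠ ⊤ := by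
      exact (ENNReal.sum_lt_top.2 fun k _ =>
        ENNReal.add_lt_top.2 ⟨measure_lt_top _ _, measure_lt_top _ _⟩).ne
    have hEc : (ℙ Eᶜ).toReal ≤ ∑ k : Fin K, ((ℙ (U k)).toReal + (ℙ (L k)).toReal) := by
      refine (ENNReal.toReal_mono hsumne hunion).trans_eq ?_
      rw [ENNReal.toReal_sum fun k _ =>
        (ENNReal.add_lt_top.2 ⟨measure_lt_top _ _, measure_lt_top _ _⟩).ne]
      exact Finset.sum_congr rfl fun k _ =>
        ENNReal.toReal_add (measure_ne_top _ _) (measure_ne_top _ _)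
    have hEc2 : (ℙ Eᶜ).toReal ≤ (K:ℝ) * (2 * Real.exp (-(5/16) * δ^2 * (N:ℝ))) := by
      refine hEc.trans ?_
      calc ∑ k : Fin K, ((ℙ (U k)).toReal + (ℙ (L k)).toReal)
          ≤ ∑ _k : Fin K, 2 * Real.exp (-(5/16) * δ^2 * (N:ℝ)) :=
            Finset.sum_le_sum fun k _ => key k
        _ = (K:ℝ) * (2 * Real.exp (-(5/16) * δ^2 * (N:ℝ))) := by
            simp [Finset.sum_const, Finset.card_univ]
    -- numeric comparison
    have hnum : (K:ℝ) * (2 * Real.exp (-(5/16) * δ^2 * (N:ℝ)))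
        ≤ 3 * Real.exp (-(δ ^ 2) * (N : ℝ) / 25) := by
      have hsplit : Real.exp (-(5/16) * δ^2 * (N:ℝ))
          = Real.exp (-(δ ^ 2) * (N : ℝ) / 25) * Real.exp (-(109/400 * (δ^2 * (N:ℝ)))) := by
        rw [← Real.exp_add]; ring_nf
      have hK1 : (1:ℝ) ≤ K := by exact_mod_cast hK
      have hpos : (0:ℝ) < Real.exp (109/400 * (δ^2 * (N:ℝ))) := Real.exp_pos _
      have h2 : 2 * (K:ℝ) ≤ 3 * Real.exp (109/400 * (δ^2 * (N:ℝ))) := by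
        have h3 := Real.add_one_le_exp (109/400 * (δ^2 * (N:ℝ)))
        nlinarith
      have h4 : 2 * (K:ℝ) * Real.exp (-(109/400 * (δ^2 * (N:ℝ)))) ≤ 3 := by
        rw [Real.exp_neg]
        have hinv : (0:ℝ) ≤ (Real.exp (109/400 * (δ^2 * (N:ℝ))))⁻¹ := by positivity
        have h5 := mul_le_mul_of_nonneg_right h2 hinv
        calc 2 * (K:ℝ) * (Real.exp (109/400 * (δ^2 * (N:ℝ))))⁻¹
            ≤ 3 * Real.exp (109/400 * (δ^2 * (N:ℝ)))
              * (Real.exp (109/400 * (δ^2 * (N:ℝ))))⁻¹ := h5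
          _ = 3 := by rw [mul_assoc, mul_inv_cancel₀ hpos.ne', mul_one]
      rw [hsplit]
      calc (K:ℝ) * (2 * (Real.exp (-(δ ^ 2) * (N : ℝ) / 25)
            * Real.exp (-(109/400 * (δ^2 * (N:ℝ))))))
          = (2 * (K:ℝ) * Real.exp (-(109/400 * (δ^2 * (N:ℝ)))))
            * Real.exp (-(δ ^ 2) * (N : ℝ) / 25) := by ring
        _ ≤ 3 * Real.exp (-(δ ^ 2) * (N : ℝ) / 25) :=
            mul_le_mul_of_nonneg_right h4 hexp0.le
    -- conclude
    have hcompl : (ℙ Eᶜ).toReal = 1 - (ℙ E).toReal := by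
      rw [prob_compl_eq_one_sub hEm,
        ENNReal.toReal_sub_of_le prob_le_one ENNReal.one_ne_top]
      simp
    have := hEc2.trans hnum
    rw [hcompl] at this
    linarith
end
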